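/- Let $G \rightrightarrows O$ be a finite groupoid and $k$ a field. On the groupoid algebra $A = kG$ define $g\circ g' = gg'$ (groupoid composition extended by zero when not composable), with unit $e = \sum_{x\in O} x$, and $g\star g' = \delta_{g,g'}\, g$ (pointwise product on the basis), with unit $i = \sum_{g\in G} g$. Then $(A, \circ, e, \star, i)$ is a double algebra. -/
import Mathlib


open CategoryTheory

variable {k : Type*} [Field k] {G : Type*} [Groupoid G] [Fintype G] [DecidableEq G]
  [Fintype (Σ x : G, Σ y : G, x ⟶ y)] [DecidableEq (Σ x : G, Σ y : G, x ⟶ y)]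

/-- The vertical (groupoid-algebra) product on `kG = (arrows of G) → k`:
`g ∘ g' = gg'`, the composite when the arrows are composable and `0` otherwise,
extended bilinearly. -/
def gVmul (f g : (Σ x : G, Σ y : G, x ⟶ y) → k) : (Σ x : G, Σ y : G, x ⟶ y) → k :=
  fun r =>
    ∑ p : (Σ x : G, Σ y : G, x ⟶ y), ∑ q : (Σ x : G, Σ y : G, x ⟶ y),
      if h : p.2.1 = q.1 then
        (if r = ⟨p.1, q.2.1, p.2.2 ≫ eqToHom h ≫ q.2.2⟩ then f p * g q else 0)
      else 0

/-- The horizontal product on `kG`: `g ⋆ g' = δ_{g,g'} g`, i.e. the pointwise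
product of coefficient functions. -/
def gHmul (f g : (Σ x : G, Σ y : G, x ⟶ y) → k) : (Σ x : G, Σ y : G, x ⟶ y) → k :=
  fun r => f r * g r

/-- The vertical unit `e = ∑_{x ∈ O} x`, the sum of the identity arrows. -/
def gE : (Σ x : G, Σ y : G, x ⟶ y) → k :=
  fun r => ∑ x : G, if r = ⟨x, x, 𝟙 x⟩ then (1 : k) else 0

/-- The horizontal unit `i = ∑_{g ∈ G} g`, the sum of all arrows. -/
def gI : (Σ x : G, Σ y : G, x ⟶ y) → k := fun _ => 1

set_option linter.unusedVariables false
set_option linter.unusedSectionVars false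

lemma gVmul_pform (f g : (Σ x : G, Σ y : G, x ⟶ y) → k) (r : (Σ x : G, Σ y : G, x ⟶ y)) :
    gVmul f g r = ∑ p : (Σ x : G, Σ y : G, x ⟶ y),
      if h : p.1 = r.1 then
        f p * g ⟨p.2.1, r.2.1, Groupoid.inv p.2.2 ≫ eqToHom h ≫ r.2.2⟩ else 0 := by
  unfold gVmul
  refine Finset.sum_congr rfl fun p _ => ?_
  obtain ⟨x, y, φ⟩ := p
  obtain ⟨u, v, ρ⟩ := r
  by_cases h : x = u
  · subst h
    rw [dif_pos rfl]
    rw [Finset.sum_eq_single (⟨y, v, Groupoid.inv φ ≫ eqToHom rfl ≫ ρ⟩ :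
        (Σ x : G, Σ y : G, x ⟶ y))]
    · simp
    · rintro ⟨a, b, ψ⟩ _ hq
      dsimp only
      by_cases h1 : y = a
      · subst h1
        rw [dif_pos rfl, if_neg]
        intro h2
        apply hq
        simp only [Sigma.mk.inj_iff, heq_eq_eq, true_and, eqToHom_refl,
          Category.id_comp] at h2 ⊢
        obtain ⟨h3, h4⟩ := h2
        subst h3
        subst h4
        simp
      · rw [dif_neg h1]
    · intro h; exact absurd (Finset.mem_univ _) h
  · rw [dif_neg h]
    refine Finset.sum_eq_zero fun q _ => ?_
    rcases q with ⟨a, b, ψ⟩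
    dsimp only
    split_ifs with h1 h2
    · exact absurd (congrArg (fun t => t.1) h2).symm h
    · rfl
    · rfl

lemma gVmul_qform (f g : (Σ x : G, Σ y : G, x ⟶ y) → k) (r : (Σ x : G, Σ y : G, x ⟶ y)) :
    gVmul f g r = ∑ q : (Σ x : G, Σ y : G, x ⟶ y),
      if h : q.2.1 = r.2.1 then
        f ⟨r.1, q.1, r.2.2 ≫ eqToHom h.symm ≫ Groupoid.inv q.2.2⟩ * g q else 0 := by
  unfold gVmul
  rw [Finset.sum_comm]
  refine Finset.sum_congr rfl fun q _ => ?_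
  obtain ⟨a, b, ψ⟩ := q
  obtain ⟨u, v, ρ⟩ := r
  by_cases h : b = v
  · subst h
    rw [dif_pos rfl]
    rw [Finset.sum_eq_single (⟨u, a, ρ ≫ eqToHom rfl ≫ Groupoid.inv ψ⟩ :
        (Σ x : G, Σ y : G, x ⟶ y))]
    · simp
    · rintro ⟨x, y, φ⟩ _ hp
      dsimp only
      by_cases h1 : y = a
      · subst h1
        rw [dif_pos rfl, if_neg]
        intro h2
        apply hp
        have hx : u = x := congrArg (fun t => t.1) h2
        subst hx
        simp only [Sigma.mk.inj_iff, heq_eq_eq, true_and, eqToHom_refl,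
          Category.id_comp] at h2 ⊢
        subst h2
        simp
      · rw [dif_neg h1]
    · intro h; exact absurd (Finset.mem_univ _) h
  · rw [dif_neg h]
    refine Finset.sum_eq_zero fun p _ => ?_
    rcases p with ⟨x, y, φ⟩
    dsimp only
    split_ifs with h1 h2
    · exact absurd (congrArg (fun t => t.2.1) h2).symm h
    · rfl
    · rfl

lemma gE_apply (r : (Σ x : G, Σ y : G, x ⟶ y)) :
    gE r = if r = ⟨r.1, r.1, 𝟙 r.1⟩ then (1 : k) else 0 := by
  unfold gE
  rw [Finset.sum_eq_single r.1]
  · intro x _ hx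
    rw [if_neg]
    intro h
    exact hx (congrArg (fun t => t.1) h).symm
  · intro h; exact absurd (Finset.mem_univ _) h

lemma gE_id (x : G) : gE (⟨x, x, 𝟙 x⟩ : (Σ x : G, Σ y : G, x ⟶ y)) = (1 : k) := by
  rw [gE_apply]; simp

lemma gE_ne {r : (Σ x : G, Σ y : G, x ⟶ y)} (h : r ≠ ⟨r.1, r.1, 𝟙 r.1⟩) :
    gE r = (0 : k) := by
  rw [gE_apply, if_neg h]

lemma L1 (a b : (Σ x : G, Σ y : G, x ⟶ y) → k) (r : (Σ x : G, Σ y : G, x ⟶ y)) :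
    gVmul (gHmul a gE) b r = a ⟨r.1, r.1, 𝟙 r.1⟩ * b r := by
  rw [gVmul_pform]
  obtain ⟨u, v, ρ⟩ := r
  rw [Finset.sum_eq_single (⟨u, u, 𝟙 u⟩ : (Σ x : G, Σ y : G, x ⟶ y))]
  · rw [dif_pos rfl]
    have h1 : gE (⟨u, u, 𝟙 u⟩ : (Σ x : G, Σ y : G, x ⟶ y)) = (1 : k) := gE_id u
    simp [gHmul, h1, Groupoid.inv_eq_inv]
  · rintro ⟨x, y, φ⟩ _ hp
    dsimp only
    by_cases h : x = u
    · subst h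
      rw [dif_pos rfl]
      have h0 : gE (⟨x, y, φ⟩ : (Σ x : G, Σ y : G, x ⟶ y)) = (0 : k) := gE_ne hp
      simp [gHmul, h0]
    · rw [dif_neg h]
  · intro h; exact absurd (Finset.mem_univ _) h

lemma L2 (a b : (Σ x : G, Σ y : G, x ⟶ y) → k) (r : (Σ x : G, Σ y : G, x ⟶ y)) :
    gVmul a (gHmul b gE) r = a r * b ⟨r.2.1, r.2.1, 𝟙 r.2.1⟩ := by
  rw [gVmul_qform]
  obtain ⟨u, v, ρ⟩ := r
  rw [Finset.sum_eq_single (⟨v, v, 𝟙 v⟩ : (Σ x : G, Σ y : G, x ⟶ y))]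
  · rw [dif_pos rfl]
    have h1 : gE (⟨v, v, 𝟙 v⟩ : (Σ x : G, Σ y : G, x ⟶ y)) = (1 : k) := gE_id v
    simp [gHmul, h1, Groupoid.inv_eq_inv]
  · rintro ⟨x, y, φ⟩ _ hq
    dsimp only
    by_cases h : y = v
    · subst h
      rw [dif_pos rfl]
      have h0 : gE (⟨x, y, φ⟩ : (Σ x : G, Σ y : G, x ⟶ y)) = (0 : k) := by
        refine gE_ne fun hc => hq ?_
        have hxy : y = x := congrArg (fun t => t.2.1) hc
        subst hxy
        exact hc
      simp [gHmul, h0]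
    · rw [dif_neg h]
  · intro h; exact absurd (Finset.mem_univ _) h

lemma L3 (a : (Σ x : G, Σ y : G, x ⟶ y) → k) (r : (Σ x : G, Σ y : G, x ⟶ y)) :
    gVmul a gI r = gVmul a gI ⟨r.1, r.1, 𝟙 r.1⟩ := by
  rw [gVmul_pform, gVmul_pform]
  refine Finset.sum_congr rfl fun p _ => ?_
  by_cases h : p.1 = r.1
  · rw [dif_pos h, dif_pos h]; simp [gI]
  · rw [dif_neg h, dif_neg h]

lemma L4 (a : (Σ x : G, Σ y : G, x ⟶ y) → k) (r : (Σ x : G, Σ y : G, x ⟶ y)) :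
    gVmul gI a r = gVmul gI a ⟨r.2.1, r.2.1, 𝟙 r.2.1⟩ := by
  rw [gVmul_qform, gVmul_qform]
  refine Finset.sum_congr rfl fun q _ => ?_
  by_cases h : q.2.1 = r.2.1
  · rw [dif_pos h, dif_pos h]; simp [gI]
  · rw [dif_neg h, dif_neg h]

lemma gHmul_comm (f g : (Σ x : G, Σ y : G, x ⟶ y) → k) : gHmul f g = gHmul g f :=
  funext fun r => mul_comm _ _

lemma gE_eq_hmul : (gE : (Σ x : G, Σ y : G, x ⟶ y) → k) = gHmul gI gE :=
  funext fun r => (one_mul _).symm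

lemma gVmul_assoc (f g c : (Σ x : G, Σ y : G, x ⟶ y) → k) :
    gVmul (gVmul f g) c = gVmul f (gVmul g c) := by
  funext r
  rw [gVmul_qform (gVmul f g) c r, gVmul_pform f (gVmul g c) r]
  have hL : ∀ s : (Σ x : G, Σ y : G, x ⟶ y),
      (if h : s.2.1 = r.2.1 then
        gVmul f g ⟨r.1, s.1, r.2.2 ≫ eqToHom h.symm ≫ Groupoid.inv s.2.2⟩ * c s else 0)
      = ∑ p : (Σ x : G, Σ y : G, x ⟶ y),
          (if h : p.1 = r.1 ∧ s.2.1 = r.2.1 then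
            f p * (g ⟨p.2.1, s.1, Groupoid.inv p.2.2 ≫ eqToHom h.1 ≫ r.2.2 ≫
              eqToHom h.2.symm ≫ Groupoid.inv s.2.2⟩ * c s) else 0) := by
    intro s
    by_cases h1 : s.2.1 = r.2.1
    · rw [dif_pos h1, gVmul_pform, Finset.sum_mul]
      refine Finset.sum_congr rfl fun p _ => ?_
      by_cases h2 : p.1 = r.1
      · rw [dif_pos h2, dif_pos (⟨h2, h1⟩ : p.1 = r.1 ∧ s.2.1 = r.2.1)]
        exact mul_assoc _ _ _
      · rw [dif_neg h2, dif_neg (fun h => h2 h.1), zero_mul]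
    · rw [dif_neg h1]
      exact (Finset.sum_eq_zero fun p _ => dif_neg (fun h => h1 h.2)).symm
  have hR : ∀ p : (Σ x : G, Σ y : G, x ⟶ y),
      (if h : p.1 = r.1 then
        f p * gVmul g c ⟨p.2.1, r.2.1, Groupoid.inv p.2.2 ≫ eqToHom h ≫ r.2.2⟩ else 0)
      = ∑ s : (Σ x : G, Σ y : G, x ⟶ y),
          (if h : p.1 = r.1 ∧ s.2.1 = r.2.1 then
            f p * (g ⟨p.2.1, s.1, Groupoid.inv p.2.2 ≫ eqToHom h.1 ≫ r.2.2 ≫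
              eqToHom h.2.symm ≫ Groupoid.inv s.2.2⟩ * c s) else 0) := by
    intro p
    by_cases h2 : p.1 = r.1
    · rw [dif_pos h2, gVmul_qform, Finset.mul_sum]
      refine Finset.sum_congr rfl fun s _ => ?_
      by_cases h1 : s.2.1 = r.2.1
      · rw [dif_pos h1, dif_pos (⟨h2, h1⟩ : p.1 = r.1 ∧ s.2.1 = r.2.1)]
        simp only [Category.assoc]
      · rw [dif_neg h1, dif_neg (fun h => h1 h.2), mul_zero]
    · rw [dif_neg h2]
      exact (Finset.sum_eq_zero fun s _ => dif_neg (fun h => h2 h.1)).symm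
  refine (Finset.sum_congr rfl fun s _ => hL s).trans ?_
  refine Eq.trans ?_ (Finset.sum_congr rfl fun p _ => hR p).symm
  exact Finset.sum_comm

/-- for a finite groupoid `G`, the groupoid algebra `kG` with the
convolution product `∘` (unit `e = ∑_{x∈O} x`) and the pointwise product `⋆`
(unit `i = ∑_{g∈G} g`) is a double algebra: both products are associative and
unital and axioms A1–A8 hold. -/
theorem stmt14 :
    (∀ f g h : (Σ x : G, Σ y : G, x ⟶ y) → k,
      gVmul (gVmul f g) h = gVmul f (gVmul g h)) ∧
    (∀ f : (Σ x : G, Σ y : G, x ⟶ y) → k, gVmul f gE = f ∧ gVmul gE f = f) ∧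
    (∀ f g h : (Σ x : G, Σ y : G, x ⟶ y) → k,
      gHmul (gHmul f g) h = gHmul f (gHmul g h)) ∧
    (∀ f : (Σ x : G, Σ y : G, x ⟶ y) → k, gHmul f gI = f ∧ gHmul gI f = f) ∧
    (∀ a b : (Σ x : G, Σ y : G, x ⟶ y) → k,
      gVmul (gHmul a gE) b = gHmul (gVmul (gHmul a gE) gI) b) ∧          -- A1
    (∀ a b : (Σ x : G, Σ y : G, x ⟶ y) → k,
      gVmul a (gHmul b gE) = gHmul (gVmul gI (gHmul b gE)) a) ∧          -- A2
    (∀ a b : (Σ x : G, Σ y : G, x ⟶ y) → k,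
      gHmul (gVmul a gI) b = gVmul (gHmul (gVmul a gI) gE) b) ∧          -- A3
    (∀ a b : (Σ x : G, Σ y : G, x ⟶ y) → k,
      gHmul a (gVmul b gI) = gVmul (gHmul gE (gVmul b gI)) a) ∧          -- A4
    (∀ a b : (Σ x : G, Σ y : G, x ⟶ y) → k,
      gVmul a (gHmul gE b) = gHmul a (gVmul gI (gHmul gE b))) ∧          -- A5
    (∀ a b : (Σ x : G, Σ y : G, x ⟶ y) → k,
      gVmul (gHmul gE a) b = gHmul b (gVmul (gHmul gE a) gI)) ∧          -- A6
    (∀ a b : (Σ x : G, Σ y : G, x ⟶ y) → k,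
      gHmul a (gVmul gI b) = gVmul a (gHmul gE (gVmul gI b))) ∧          -- A7
    (∀ a b : (Σ x : G, Σ y : G, x ⟶ y) → k,
      gHmul (gVmul gI a) b = gVmul b (gHmul (gVmul gI a) gE)) := by
  refine ⟨gVmul_assoc, ?_, ?_, ?_, ?_, ?_, ?_, ?_, ?_, ?_, ?_, ?_⟩
  · -- gVmul units
    intro f
    constructor
    · funext r
      rw [gE_eq_hmul, L2]
      simp [gI]
    · funext r
      rw [gE_eq_hmul, L1]
      simp [gI]
  · -- gHmul assoc
    intro f g h
    exact funext fun r => mul_assoc _ _ _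
  · -- gHmul units
    intro f
    exact ⟨funext fun r => mul_one _, funext fun r => one_mul _⟩
  · -- A1
    intro a b
    funext r
    rw [L1]
    show _ = gVmul (gHmul a gE) gI r * b r
    rw [L1]
    simp [gI]
  · -- A2
    intro a b
    funext r
    rw [L2]
    show _ = gVmul gI (gHmul b gE) r * a r
    rw [L2]
    simp [gI]
    ring
  · -- A3
    intro a b
    funext r
    show gVmul a gI r * b r = _
    rw [L1, ← L3]
  · -- A4
    intro a b
    funext r
    show a r * gVmul b gI r = _
    rw [gHmul_comm gE, L1, ← L3]
    ring
  · -- A5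
    intro a b
    funext r
    rw [gHmul_comm gE b, L2]
    show _ = a r * gVmul gI (gHmul b gE) r
    rw [L2]
    simp [gI]
  · -- A6
    intro a b
    funext r
    rw [gHmul_comm gE a, L1]
    show _ = b r * gVmul (gHmul a gE) gI r
    rw [L1]
    simp [gI]
    ring
  · -- A7
    intro a b
    funext r
    show a r * gVmul gI b r = _
    rw [gHmul_comm gE, L2, ← L4]
  · -- A8
    intro a b
    funext r
    show gVmul gI a r * b r = _
    rw [L2, ← L4]
    ring
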